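/- arXiv:2012.11752 — 2 statements merged into one kernel-verified Lean document; each statement's English description precedes it below -/
import Mathlib

section
/- Let m = 5. For every coordinate k ∈ Fin N and every vertex function f on C_5^N, the reflection operator commutes with the outer and inner adjacencies: ρ_k (A_+ f) = A_+ (ρ_k f) and ρ_k (A_- f) = A_- (ρ_k f). -/
open Finset

/-- The standard generator `e_k` of `(ZMod m)^N`: equal to `1` in coordinate `k`,
`0` elsewhere. -/
def eV (N m : ℕ) (k : Fin N) : Fin N → ZMod m :=
  fun j => if j = k then 1 else 0

/-- Adjacency in the Cayley graph `C_m^N`: `v ∼ w` iff `w = v + e_k` or `w = v - e_k`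
for some coordinate `k`. -/
def adj (N m : ℕ) (v w : Fin N → ZMod m) : Prop :=
  ∃ k : Fin N, w = v + eV N m k ∨ w = v - eV N m k

/-- The `k`-th level of a vertex: `d_k(v) = min((v k).val, m - (v k).val)`. -/
def lev (N m : ℕ) (v : Fin N → ZMod m) (k : Fin N) : ℕ :=
  min ((v k).val) (m - (v k).val)

/-- Path distance of a vertex to the origin: `d(v) = Σ_k d_k(v)`. -/
def distO (N m : ℕ) (v : Fin N → ZMod m) : ℕ :=
  ∑ k : Fin N, lev N m v k

open Classical in
/-- Adjacency operator: `(A f)(v) = Σ_{w ∼ v} f(w)`. -/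
noncomputable def Aop (N m : ℕ) [NeZero m] (f : (Fin N → ZMod m) → ℂ) :
    (Fin N → ZMod m) → ℂ :=
  fun v => ∑ w : Fin N → ZMod m, if adj N m v w then f w else 0

open Classical in
/-- Outer adjacency: `(A₊ f)(v) = Σ_{w ∼ v, d(w) < d(v)} f(w)`. -/
noncomputable def Aplus (N m : ℕ) [NeZero m] (f : (Fin N → ZMod m) → ℂ) :
    (Fin N → ZMod m) → ℂ :=
  fun v => ∑ w : Fin N → ZMod m,
    if adj N m v w ∧ distO N m w < distO N m v then f w else 0

open Classical in
/-- Inner adjacency: `(A₋ f)(v) = Σ_{w ∼ v, d(w) > d(v)} f(w)`. -/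
noncomputable def Aminus (N m : ℕ) [NeZero m] (f : (Fin N → ZMod m) → ℂ) :
    (Fin N → ZMod m) → ℂ :=
  fun v => ∑ w : Fin N → ZMod m,
    if adj N m v w ∧ distO N m v < distO N m w then f w else 0

open Classical in
/-- Neutral adjacency: `(A₀ f)(v) = Σ_{w ∼ v, d(w) = d(v)} f(w)`. -/
noncomputable def Azero (N m : ℕ) [NeZero m] (f : (Fin N → ZMod m) → ℂ) :
    (Fin N → ZMod m) → ℂ :=
  fun v => ∑ w : Fin N → ZMod m,
    if adj N m v w ∧ distO N m w = distO N m v then f w else 0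

/-- The `k`-reflection `ṽ_k` of a vertex: negate the `k`-th coordinate. -/
def reflV (N m : ℕ) (k : Fin N) (v : Fin N → ZMod m) : Fin N → ZMod m :=
  Function.update v k (-(v k))

/-- Level-one reflection sum: `(R₁ f)(v) = Σ_{k : d_k(v) = 1} f(ṽ_k)`. -/
noncomputable def R1 (N m : ℕ) (f : (Fin N → ZMod m) → ℂ) :
    (Fin N → ZMod m) → ℂ :=
  fun v => ∑ k ∈ Finset.univ.filter (fun k => lev N m v k = 1), f (reflV N m k v)

/-- Number of coordinates of `v` at level `ℓ`. -/
def cardLev (N m : ℕ) (v : Fin N → ZMod m) (ℓ : ℕ) : ℕ :=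
  (Finset.univ.filter (fun k => lev N m v k = ℓ)).card


lemma reflV_invol (N m : ℕ) (k : Fin N) (v : Fin N → ZMod m) :
    reflV N m k (reflV N m k v) = v := by
  funext j
  by_cases h : j = k
  · subst h; simp [reflV]
  · simp [reflV, Function.update_of_ne h]

lemma lev_reflV (N : ℕ) (k : Fin N) (v : Fin N → ZMod 5) (j : Fin N) :
    lev N 5 (reflV N 5 k v) j = lev N 5 v j := by
  by_cases h : j = k
  · subst h
    simp only [reflV, lev, Function.update_self]
    revert v; intro v
    have : ∀ x : ZMod 5, min ((-x).val) (5 - (-x).val) = min x.val (5 - x.val) := by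
      decide
    exact this (v j)
  · simp [reflV, lev, Function.update_of_ne h]

lemma distO_reflV (N : ℕ) (k : Fin N) (v : Fin N → ZMod 5) :
    distO N 5 (reflV N 5 k v) = distO N 5 v := by
  unfold distO
  exact Finset.sum_congr rfl fun j _ => lev_reflV N k v j

lemma adj_reflV (N m : ℕ) (k : Fin N) (v w : Fin N → ZMod m) (h : adj N m v w) :
    adj N m (reflV N m k v) (reflV N m k w) := by
  obtain ⟨j, hj | hj⟩ := h
  · subst hj
    refine ⟨j, ?_⟩
    by_cases hjk : j = k
    · subst hjk
      right; funext i
      by_cases hik : i = j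
      · subst hik; simp [reflV, eV]; ring
      · simp [reflV, Function.update_of_ne hik, eV, hik]
    · left; funext i
      by_cases hik : i = k
      · subst hik
        simp [reflV, eV, Ne.symm hjk]
      · simp [reflV, Function.update_of_ne hik, eV]
  · subst hj
    refine ⟨j, ?_⟩
    by_cases hjk : j = k
    · subst hjk
      left; funext i
      by_cases hik : i = j
      · subst hik; simp [reflV, eV]; ring
      · simp [reflV, Function.update_of_ne hik, eV, hik]
    · right; funext i
      by_cases hik : i = k
      · subst hik
        simp [reflV, eV, Ne.symm hjk]
      · simp [reflV, Function.update_of_ne hik, eV]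

lemma adj_reflV_iff (N m : ℕ) (k : Fin N) (v w : Fin N → ZMod m) :
    adj N m (reflV N m k v) (reflV N m k w) ↔ adj N m v w := by
  constructor
  · intro h
    have := adj_reflV N m k _ _ h
    rwa [reflV_invol, reflV_invol] at this
  · exact adj_reflV N m k v w

/-- on `C_5^N`, coordinate reflections commute with the outer and
inner adjacency operators: `ρ_k A₊ f = A₊ ρ_k f` and `ρ_k A₋ f = A₋ ρ_k f`. -/
theorem reflection_commutes_C5 (N : ℕ) (hN : 1 ≤ N) (k : Fin N)
    (f : (Fin N → ZMod 5) → ℂ) :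
    (∀ v, Aplus N 5 f (reflV N 5 k v) = Aplus N 5 (fun u => f (reflV N 5 k u)) v) ∧
    (∀ v, Aminus N 5 f (reflV N 5 k v) = Aminus N 5 (fun u => f (reflV N 5 k u)) v) := by
  classical
  have key : ∀ (P : ℕ → ℕ → Prop) [DecidableRel P] (v : Fin N → ZMod 5),
      (∑ w : Fin N → ZMod 5,
        if adj N 5 (reflV N 5 k v) w ∧ P (distO N 5 w) (distO N 5 (reflV N 5 k v)) then f w else 0)
      = ∑ w : Fin N → ZMod 5,
        if adj N 5 v w ∧ P (distO N 5 w) (distO N 5 v) then f (reflV N 5 k w) else 0 := by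
    intro P _ v
    refine Fintype.sum_equiv (Function.Involutive.toPerm (reflV N 5 k) (fun v => reflV_invol N 5 k v)) _ _ ?_
    intro w
    change _ = (fun w => if adj N 5 v w ∧ P (distO N 5 w) (distO N 5 v) then f (reflV N 5 k w) else 0) (reflV N 5 k w)
    dsimp only
    rw [reflV_invol, distO_reflV, distO_reflV,
      ← adj_reflV_iff N 5 k v (reflV N 5 k w), reflV_invol]
  constructor
  · intro v
    have := key (fun a b => a < b) v
    simpa only [Aplus] using this
  · intro v
    have := key (fun a b => b < a) v
    simpa only [Aminus] using this
end

section
/- Let m = 5, p ≥ 1, and q ∈ ℕ. Let f be a vertex function on C_5^N supported in Σ_{p,q}, and let B denote the internal outer subadjacency B g = 𝟙_{Σ_{p−1,q+1}} · (A_+ g). Then for every vertex v ∈ Σ_{p,q}: (A_-(A_0(B f) − B(A_0 f)))(v) = (R_1 f)(v) − (A_0 f)(v) + Σ_{ν : d_ν(v) = 2} (A_- f)((v_ν^-)~_ν), where (v_ν^-)~_ν denotes the ν-reflection of the vertex v_ν^-. -/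
open Finset

/-- For a vertex `v` of `C_5^N` with `d_ν(v) = 2`, the vertex `v_ν⁻` agreeing with
`v` off coordinate `ν` with level `1` there, of the same sign (value `2` becomes
`1`; value `3` becomes `4`). -/
def vmin (N : ℕ) (v : Fin N → ZMod 5) (ν : Fin N) : Fin N → ZMod 5 :=
  Function.update v ν (if (v ν).val = 2 then 1 else 4)

open Classical in
/-- The internal outer subadjacency `B g = 𝟙_{Σ_{p-1,q+1}} ⬝ (A₊ g)`. -/
noncomputable def Bop (N p q : ℕ) (g : (Fin N → ZMod 5) → ℂ) :
    (Fin N → ZMod 5) → ℂ :=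
  fun v => if cardLev N 5 v 1 + 1 = p ∧ cardLev N 5 v 2 = q + 1
    then Aplus N 5 g v else 0

section Aux
variable {N : ℕ}

lemma add_eV (v : Fin N → ZMod 5) (k : Fin N) :
    v + eV N 5 k = Function.update v k (v k + 1) := by
  funext j
  rcases eq_or_ne j k with h | h <;>
    simp [eV, Function.update_apply, h]

lemma sub_eV (v : Fin N → ZMod 5) (k : Fin N) :
    v - eV N 5 k = Function.update v k (v k - 1) := by
  funext j
  rcases eq_or_ne j k with h | h <;>
    simp [eV, Function.update_apply, h]

lemma distO_update (v : Fin N → ZMod 5) (k : Fin N) (a : ZMod 5) :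
    distO N 5 (Function.update v k a) + lev N 5 v k
      = distO N 5 v + min a.val (5 - a.val) := by
  unfold distO
  rw [← Finset.add_sum_erase _ _ (Finset.mem_univ k),
      ← Finset.add_sum_erase _ (fun j => lev N 5 v j) (Finset.mem_univ k)]
  have h1 : lev N 5 (Function.update v k a) k = min a.val (5 - a.val) := by
    simp [lev]
  have h2 : ∀ j ∈ Finset.univ.erase k,
      lev N 5 (Function.update v k a) j = lev N 5 v j := by
    intro j hj
    simp [lev, Function.update_of_ne (Finset.mem_erase.1 hj).1]
  rw [Finset.sum_congr rfl h2, h1]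
  ring

lemma cardLev_update (v : Fin N → ZMod 5) (k : Fin N) (a : ZMod 5) (ℓ : ℕ) :
    cardLev N 5 (Function.update v k a) ℓ + (if lev N 5 v k = ℓ then 1 else 0)
      = cardLev N 5 v ℓ + (if min a.val (5 - a.val) = ℓ then 1 else 0) := by
  classical
  unfold cardLev
  rw [Finset.card_filter, Finset.card_filter,
      ← Finset.add_sum_erase _ _ (Finset.mem_univ k),
      ← Finset.add_sum_erase _ (fun j => if lev N 5 v j = ℓ then 1 else 0)
        (Finset.mem_univ k)]
  have h1 : lev N 5 (Function.update v k a) k = min a.val (5 - a.val) := by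
    simp [lev]
  have h2 : ∀ j ∈ Finset.univ.erase k,
      lev N 5 (Function.update v k a) j = lev N 5 v j := by
    intro j hj
    simp [lev, Function.update_of_ne (Finset.mem_erase.1 hj).1]
  have h3 : ∑ j ∈ Finset.univ.erase k,
        (if lev N 5 (Function.update v k a) j = ℓ then (1:ℕ) else 0)
      = ∑ j ∈ Finset.univ.erase k, (if lev N 5 v j = ℓ then 1 else 0) := by
    apply Finset.sum_congr rfl
    intro j hj; rw [h2 j hj]
  rw [h3, h1]
  ring

open Classical in
lemma sum_adj (v : Fin N → ZMod 5) (P : (Fin N → ZMod 5) → Prop)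
    [inst : ∀ w, Decidable (adj N 5 v w ∧ P w)]
    (g : (Fin N → ZMod 5) → ℂ) :
    (∑ w : Fin N → ZMod 5, if adj N 5 v w ∧ P w then g w else 0)
      = ∑ k : Fin N, ((if P (v + eV N 5 k) then g (v + eV N 5 k) else 0)
          + (if P (v - eV N 5 k) then g (v - eV N 5 k) else 0)) := by
  classical
  set nb : Fin N × Bool → (Fin N → ZMod 5) :=
    fun p => if p.2 then v + eV N 5 p.1 else v - eV N 5 p.1 with hnb
  have hinj : ∀ x ∈ (Finset.univ : Finset (Fin N × Bool)), ∀ y ∈ Finset.univ,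
      nb x = nb y → x = y := by
    rintro ⟨k, b⟩ - ⟨j, c⟩ - h
    have hk := congrFun h k
    cases b <;> cases c <;>
      simp only [hnb, Pi.add_apply, Pi.sub_apply, eV, if_true, if_false,
        Bool.false_eq_true, ite_true, ite_false] at hk ⊢
    · rcases eq_or_ne k j with rfl | hkj
      · simp
      · rw [if_neg hkj] at hk
        exact absurd (show (1:ZMod 5) = 0 by linear_combination -hk) (by decide)
    · exfalso
      rcases eq_or_ne k j with rfl | hkj
      · rw [if_pos rfl] at hk
        exact absurd (show (1:ZMod 5) + 1 = 0 by linear_combination -hk) (by decide)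
      · rw [if_neg hkj] at hk
        exact absurd (show (1:ZMod 5) = 0 by linear_combination -hk) (by decide)
    · exfalso
      rcases eq_or_ne k j with rfl | hkj
      · rw [if_pos rfl] at hk
        exact absurd (show (1:ZMod 5) + 1 = 0 by linear_combination hk) (by decide)
      · rw [if_neg hkj] at hk
        exact absurd (show (1:ZMod 5) = 0 by linear_combination hk) (by decide)
    · rcases eq_or_ne k j with rfl | hkj
      · simp
      · rw [if_neg hkj] at hk
        exact absurd (show (1:ZMod 5) = 0 by linear_combination hk) (by decide)
  have himg : Finset.univ.filter (fun w => adj N 5 v w)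
      = Finset.image nb Finset.univ := by
    ext w
    simp only [Finset.mem_filter, Finset.mem_univ, true_and, Finset.mem_image]
    constructor
    · rintro ⟨k, h | h⟩
      · exact ⟨(k, true), h.symm⟩
      · exact ⟨(k, false), h.symm⟩
    · rintro ⟨⟨k, b⟩, -, rfl⟩
      cases b
      · exact ⟨k, Or.inr rfl⟩
      · exact ⟨k, Or.inl rfl⟩
  calc (∑ w : Fin N → ZMod 5, if adj N 5 v w ∧ P w then g w else 0)
      = ∑ w : Fin N → ZMod 5, if adj N 5 v w then (if P w then g w else 0) else 0 := by
        apply Finset.sum_congr rfl; intro w _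
        by_cases h1 : adj N 5 v w <;> by_cases h2 : P w <;> simp [h1, h2]
    _ = ∑ w ∈ Finset.univ.filter (fun w => adj N 5 v w), (if P w then g w else 0) :=
        (Finset.sum_filter _ _).symm
    _ = ∑ p : Fin N × Bool, (if P (nb p) then g (nb p) else 0) := by
        rw [himg, Finset.sum_image hinj]
    _ = _ := by
        rw [Fintype.sum_prod_type]
        apply Finset.sum_congr rfl
        intro k _
        rw [Fintype.sum_bool]
        simp [hnb]

end Aux


section Aux2
variable {N : ℕ}

lemma lev_eq_min (v : Fin N → ZMod 5) (k : Fin N) :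
    lev N 5 v k = min (v k).val (5 - (v k).val) := rfl

open Classical in
lemma Aminus_eq (g : (Fin N → ZMod 5) → ℂ) (v : Fin N → ZMod 5) :
    Aminus N 5 g v = ∑ k : Fin N,
      ((if (v k).val = 0 ∨ (v k).val = 1 then g (v + eV N 5 k) else 0)
        + (if (v k).val = 0 ∨ (v k).val = 4 then g (v - eV N 5 k) else 0)) := by
  have key1 : ∀ a : ZMod 5,
      (min a.val (5 - a.val) < min (a+1).val (5 - (a+1).val))
        ↔ (a.val = 0 ∨ a.val = 1) := by decide
  have key2 : ∀ a : ZMod 5,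
      (min a.val (5 - a.val) < min (a-1).val (5 - (a-1).val))
        ↔ (a.val = 0 ∨ a.val = 4) := by decide
  simp only [Aminus]
  rw [sum_adj v (fun w => distO N 5 v < distO N 5 w)]
  apply Finset.sum_congr rfl
  intro k _
  have H1 : (distO N 5 v < distO N 5 (v + eV N 5 k)) ↔ ((v k).val = 0 ∨ (v k).val = 1) := by
    rw [add_eV, ← key1 (v k)]
    have hd := distO_update v k (v k + 1)
    have hl := lev_eq_min v k
    omega
  have H2 : (distO N 5 v < distO N 5 (v - eV N 5 k)) ↔ ((v k).val = 0 ∨ (v k).val = 4) := by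
    rw [sub_eV, ← key2 (v k)]
    have hd := distO_update v k (v k - 1)
    have hl := lev_eq_min v k
    omega
  simp only [H1, H2]

open Classical in
lemma Aplus_eq (g : (Fin N → ZMod 5) → ℂ) (v : Fin N → ZMod 5) :
    Aplus N 5 g v = ∑ k : Fin N,
      ((if (v k).val = 3 ∨ (v k).val = 4 then g (v + eV N 5 k) else 0)
        + (if (v k).val = 1 ∨ (v k).val = 2 then g (v - eV N 5 k) else 0)) := by
  have key1 : ∀ a : ZMod 5,
      (min (a+1).val (5 - (a+1).val) < min a.val (5 - a.val))
        ↔ (a.val = 3 ∨ a.val = 4) := by decide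
  have key2 : ∀ a : ZMod 5,
      (min (a-1).val (5 - (a-1).val) < min a.val (5 - a.val))
        ↔ (a.val = 1 ∨ a.val = 2) := by decide
  simp only [Aplus]
  rw [sum_adj v (fun w => distO N 5 w < distO N 5 v)]
  apply Finset.sum_congr rfl
  intro k _
  have H1 : (distO N 5 (v + eV N 5 k) < distO N 5 v) ↔ ((v k).val = 3 ∨ (v k).val = 4) := by
    rw [add_eV, ← key1 (v k)]
    have hd := distO_update v k (v k + 1)
    have hl := lev_eq_min v k
    omega
  have H2 : (distO N 5 (v - eV N 5 k) < distO N 5 v) ↔ ((v k).val = 1 ∨ (v k).val = 2) := by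
    rw [sub_eV, ← key2 (v k)]
    have hd := distO_update v k (v k - 1)
    have hl := lev_eq_min v k
    omega
  simp only [H1, H2]

open Classical in
lemma Azero_eq (g : (Fin N → ZMod 5) → ℂ) (v : Fin N → ZMod 5) :
    Azero N 5 g v = ∑ k : Fin N,
      ((if (v k).val = 2 then g (v + eV N 5 k) else 0)
        + (if (v k).val = 3 then g (v - eV N 5 k) else 0)) := by
  have key1 : ∀ a : ZMod 5,
      (min (a+1).val (5 - (a+1).val) = min a.val (5 - a.val))
        ↔ a.val = 2 := by decide
  have key2 : ∀ a : ZMod 5,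
      (min (a-1).val (5 - (a-1).val) = min a.val (5 - a.val))
        ↔ a.val = 3 := by decide
  simp only [Azero]
  rw [sum_adj v (fun w => distO N 5 w = distO N 5 v)]
  apply Finset.sum_congr rfl
  intro k _
  have H1 : (distO N 5 (v + eV N 5 k) = distO N 5 v) ↔ ((v k).val = 2) := by
    rw [add_eV, ← key1 (v k)]
    have hd := distO_update v k (v k + 1)
    have hl := lev_eq_min v k
    omega
  have H2 : (distO N 5 (v - eV N 5 k) = distO N 5 v) ↔ ((v k).val = 3) := by
    rw [sub_eV, ← key2 (v k)]
    have hd := distO_update v k (v k - 1)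
    have hl := lev_eq_min v k
    omega
  simp only [H1, H2]

end Aux2


section Aux3
variable {N : ℕ}

lemma lev_two_iff : ∀ a : ZMod 5,
    min a.val (5 - a.val) = 2 ↔ (a.val = 2 ∨ a.val = 3) := by decide

lemma lev_one_iff : ∀ a : ZMod 5,
    min a.val (5 - a.val) = 1 ↔ (a.val = 1 ∨ a.val = 4) := by decide

lemma neutral_pat (x : Fin N → ZMod 5) (μ : Fin N) (E : (Fin N → ZMod 5) → ℂ) :
    ((if (x μ).val = 2 then E (x + eV N 5 μ) else 0)
      + (if (x μ).val = 3 then E (x - eV N 5 μ) else 0))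
    = if lev N 5 x μ = 2 then E (Function.update x μ (-(x μ))) else 0 := by
  have hl : lev N 5 x μ = 2 ↔ ((x μ).val = 2 ∨ (x μ).val = 3) := lev_two_iff (x μ)
  by_cases h2 : (x μ).val = 2
  · have e1 : x + eV N 5 μ = Function.update x μ (-(x μ)) := by
      rw [add_eV]
      have : ∀ a : ZMod 5, a.val = 2 → a + 1 = -a := by decide
      rw [this _ h2]
    rw [if_pos h2, if_neg (by omega), if_pos (hl.2 (Or.inl h2)), e1, add_zero]
  · by_cases h3 : (x μ).val = 3
    · have e1 : x - eV N 5 μ = Function.update x μ (-(x μ)) := by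
        rw [sub_eV]
        have : ∀ a : ZMod 5, a.val = 3 → a - 1 = -a := by decide
        rw [this _ h3]
      rw [if_pos h3, if_neg h2, if_pos (hl.2 (Or.inr h3)), e1, zero_add]
    · rw [if_neg h2, if_neg h3,
        if_neg (fun hc => by rcases hl.1 hc with h | h <;> omega), add_zero]

lemma lower_pat (x : Fin N → ZMod 5) (μ : Fin N) (E : (Fin N → ZMod 5) → ℂ) :
    ((if (x μ).val = 3 then E (x + eV N 5 μ) else 0)
      + (if (x μ).val = 2 then E (x - eV N 5 μ) else 0))
    = if lev N 5 x μ = 2 then E (Function.update x μ (3 * x μ)) else 0 := by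
  have hl : lev N 5 x μ = 2 ↔ ((x μ).val = 2 ∨ (x μ).val = 3) := lev_two_iff (x μ)
  by_cases h3 : (x μ).val = 3
  · have e1 : x + eV N 5 μ = Function.update x μ (3 * x μ) := by
      rw [add_eV]
      have : ∀ a : ZMod 5, a.val = 3 → a + 1 = 3 * a := by decide
      rw [this _ h3]
    rw [if_pos h3, if_neg (by omega), if_pos (hl.2 (Or.inr h3)), e1, add_zero]
  · by_cases h2 : (x μ).val = 2
    · have e1 : x - eV N 5 μ = Function.update x μ (3 * x μ) := by
        rw [sub_eV]
        have : ∀ a : ZMod 5, a.val = 2 → a - 1 = 3 * a := by decide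
        rw [this _ h2]
      rw [if_pos h2, if_neg h3, if_pos (hl.2 (Or.inl h2)), e1, zero_add]
    · rw [if_neg h2, if_neg h3,
        if_neg (fun hc => by rcases hl.1 hc with h | h <;> omega), add_zero]

lemma raise_pat (x : Fin N → ZMod 5) (μ : Fin N) (E : (Fin N → ZMod 5) → ℂ) :
    ((if (x μ).val = 1 then E (x + eV N 5 μ) else 0)
      + (if (x μ).val = 4 then E (x - eV N 5 μ) else 0))
    = if lev N 5 x μ = 1 then E (Function.update x μ (2 * x μ)) else 0 := by
  have hl : lev N 5 x μ = 1 ↔ ((x μ).val = 1 ∨ (x μ).val = 4) := lev_one_iff (x μ)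
  by_cases h1 : (x μ).val = 1
  · have e1 : x + eV N 5 μ = Function.update x μ (2 * x μ) := by
      rw [add_eV]
      have : ∀ a : ZMod 5, a.val = 1 → a + 1 = 2 * a := by decide
      rw [this _ h1]
    rw [if_pos h1, if_neg (by omega), if_pos (hl.2 (Or.inl h1)), e1, add_zero]
  · by_cases h4 : (x μ).val = 4
    · have e1 : x - eV N 5 μ = Function.update x μ (2 * x μ) := by
        rw [sub_eV]
        have : ∀ a : ZMod 5, a.val = 4 → a - 1 = 2 * a := by decide
        rw [this _ h4]
      rw [if_pos h4, if_neg h1, if_pos (hl.2 (Or.inr h4)), e1, zero_add]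
    · rw [if_neg h1, if_neg h4,
        if_neg (fun hc => by rcases hl.1 hc with h | h <;> omega), add_zero]

lemma split_am (n : ℕ) (A B : ℂ) :
    (if n = 0 ∨ n = 1 then A else 0) + (if n = 0 ∨ n = 4 then B else 0)
      = (if n = 0 then A + B else 0)
        + ((if n = 1 then A else 0) + (if n = 4 then B else 0)) := by
  split_ifs <;> first | (exfalso; omega) | ring

lemma split_ap (n : ℕ) (A B : ℂ) :
    (if n = 3 ∨ n = 4 then A else 0) + (if n = 1 ∨ n = 2 then B else 0)
      = ((if n = 1 then B else 0) + (if n = 4 then A else 0))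
        + ((if n = 3 then A else 0) + (if n = 2 then B else 0)) := by
  split_ifs <;> first | (exfalso; omega) | ring

lemma lev_update_self (x : Fin N → ZMod 5) (μ : Fin N) (a : ZMod 5) :
    lev N 5 (Function.update x μ a) μ = min a.val (5 - a.val) := by
  simp [lev]

lemma lev_update_ne (x : Fin N → ZMod 5) {μ j : Fin N} (a : ZMod 5) (h : j ≠ μ) :
    lev N 5 (Function.update x μ a) j = lev N 5 x j := by
  simp [lev, Function.update_of_ne h]

lemma cardLev_flip (x : Fin N → ZMod 5) (μ : Fin N) (a : ZMod 5) (l₀ : ℕ)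
    (hx : lev N 5 x μ = l₀) (ha : min a.val (5 - a.val) = l₀) (ℓ : ℕ) :
    cardLev N 5 (Function.update x μ a) ℓ = cardLev N 5 x ℓ := by
  have h := cardLev_update x μ a ℓ
  rw [hx, ha] at h
  rcases eq_or_ne l₀ ℓ with h2 | h2
  · rw [if_pos h2] at h; omega
  · rw [if_neg h2] at h; omega

lemma cardLev_move (x : Fin N → ZMod 5) (μ : Fin N) (a : ZMod 5) (l₀ l₁ : ℕ)
    (hx : lev N 5 x μ = l₀) (ha : min a.val (5 - a.val) = l₁) (hne : l₀ ≠ l₁) :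
    cardLev N 5 (Function.update x μ a) l₁ = cardLev N 5 x l₁ + 1
      ∧ cardLev N 5 (Function.update x μ a) l₀ + 1 = cardLev N 5 x l₀
      ∧ ∀ ℓ, ℓ ≠ l₀ → ℓ ≠ l₁ → cardLev N 5 (Function.update x μ a) ℓ = cardLev N 5 x ℓ := by
  refine ⟨?_, ?_, ?_⟩
  · have h := cardLev_update x μ a l₁
    rw [hx, ha, if_neg hne, if_pos rfl] at h
    omega
  · have h := cardLev_update x μ a l₀
    rw [hx, ha, if_pos rfl, if_neg (Ne.symm hne)] at h
    omega
  · intro ℓ h0 h1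
    have h := cardLev_update x μ a ℓ
    rw [hx, ha, if_neg (Ne.symm h0), if_neg (Ne.symm h1)] at h
    omega

end Aux3


section Aux4
variable {N p q : ℕ} {f : (Fin N → ZMod 5) → ℂ}

lemma neg_lev_two : ∀ a : ZMod 5, min a.val (5 - a.val) = 2 →
    min (-a).val (5 - (-a).val) = 2 := by decide

lemma ite_sum_push {c : Prop} [Decidable c] (t : Fin N → ℂ) :
    (if c then (∑ ν : Fin N, t ν) else 0) = ∑ ν : Fin N, (if c then t ν else 0) := by
  split_ifs with h
  · rfl
  · simp

open Classical in
lemma Azero_vanish (hf : ∀ v, ¬(cardLev N 5 v 1 = p ∧ cardLev N 5 v 2 = q) → f v = 0)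
    (x : Fin N → ZMod 5) (hx : ¬(cardLev N 5 x 1 = p ∧ cardLev N 5 x 2 = q)) :
    Azero N 5 f x = 0 := by
  rw [Azero_eq]
  apply Finset.sum_eq_zero
  intro μ _
  rw [neutral_pat]
  split_ifs with h
  · have hm : min (-(x μ)).val (5 - (-(x μ)).val) = 2 :=
      neg_lev_two _ (by rw [← lev_eq_min]; exact h)
    have e1 := cardLev_flip x μ (-(x μ)) 2 h hm 1
    have e2 := cardLev_flip x μ (-(x μ)) 2 h hm 2
    exact hf _ (by rw [e1, e2]; exact hx)
  · rfl

lemma val_one_down : ∀ a : ZMod 5, a.val = 1 →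
    min (a-1).val (5 - (a-1).val) = 0 := by decide

lemma val_four_up : ∀ a : ZMod 5, a.val = 4 →
    min (a+1).val (5 - (a+1).val) = 0 := by decide

lemma three_mul_lev : ∀ a : ZMod 5, min a.val (5 - a.val) = 2 →
    min (3*a).val (5 - (3*a).val) = 1 := by decide

open Classical in
lemma Aplus_supp (hf : ∀ v, ¬(cardLev N 5 v 1 = p ∧ cardLev N 5 v 2 = q) → f v = 0)
    (u : Fin N → ZMod 5) (h1 : cardLev N 5 u 1 + 1 = p) (h2 : cardLev N 5 u 2 = q + 1) :
    Aplus N 5 f u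
      = ∑ ν : Fin N, if lev N 5 u ν = 2 then f (Function.update u ν (3 * u ν)) else 0 := by
  rw [Aplus_eq]
  apply Finset.sum_congr rfl
  intro ν _
  rw [split_ap, lower_pat u ν f]
  have hz1 : (if (u ν).val = 1 then f (u - eV N 5 ν) else 0) = 0 := by
    split_ifs with h
    · rw [sub_eV]
      have hlev : lev N 5 u ν = 1 := by rw [lev_eq_min]; exact (lev_one_iff _).2 (Or.inl h)
      obtain ⟨-, hb, -⟩ := cardLev_move u ν (u ν - 1) 1 0 hlev (val_one_down _ h) (by omega)
      exact hf _ (fun hc => by omega)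
    · rfl
  have hz4 : (if (u ν).val = 4 then f (u + eV N 5 ν) else 0) = 0 := by
    split_ifs with h
    · rw [add_eV]
      have hlev : lev N 5 u ν = 1 := by rw [lev_eq_min]; exact (lev_one_iff _).2 (Or.inr h)
      obtain ⟨-, hb, -⟩ := cardLev_move u ν (u ν + 1) 1 0 hlev (val_four_up _ h) (by omega)
      exact hf _ (fun hc => by omega)
    · rfl
  rw [hz1, hz4, zero_add, zero_add]

open Classical in
lemma Bop_indicator_false (g : (Fin N → ZMod 5) → ℂ) (w : Fin N → ZMod 5)
    (hw : ¬(cardLev N 5 w 1 + 1 = p ∧ cardLev N 5 w 2 = q + 1)) :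
    Bop N p q g w = 0 := by
  simp only [Bop]
  exact if_neg hw

open Classical in
lemma Gzero (w : Fin N → ZMod 5)
    (hw : ¬(cardLev N 5 w 1 + 1 = p ∧ cardLev N 5 w 2 = q + 1)) :
    Azero N 5 (Bop N p q f) w - Bop N p q (Azero N 5 f) w = 0 := by
  have hB : Bop N p q (Azero N 5 f) w = 0 := Bop_indicator_false _ _ hw
  have hA : Azero N 5 (Bop N p q f) w = 0 := by
    rw [Azero_eq]
    apply Finset.sum_eq_zero
    intro μ _
    rw [neutral_pat]
    split_ifs with h
    · have hm : min (-(w μ)).val (5 - (-(w μ)).val) = 2 :=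
        neg_lev_two _ (by rw [← lev_eq_min]; exact h)
      have e1 := cardLev_flip w μ (-(w μ)) 2 h hm 1
      have e2 := cardLev_flip w μ (-(w μ)) 2 h hm 2
      exact Bop_indicator_false _ _ (by rw [e1, e2]; exact hw)
    · rfl
  rw [hA, hB, sub_zero]

lemma three_neg : ∀ a : ZMod 5, 3 * -a = 2 * a := by decide

open Classical in
lemma G_eq (hf : ∀ v, ¬(cardLev N 5 v 1 = p ∧ cardLev N 5 v 2 = q) → f v = 0)
    (w : Fin N → ZMod 5)
    (h1 : cardLev N 5 w 1 + 1 = p) (h2 : cardLev N 5 w 2 = q + 1) :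
    Azero N 5 (Bop N p q f) w - Bop N p q (Azero N 5 f) w
      = ∑ μ : Fin N, if lev N 5 w μ = 2 then f (Function.update w μ (2 * w μ)) else 0 := by
  have hT1 : Azero N 5 (Bop N p q f) w
      = ∑ μ : Fin N, if lev N 5 w μ = 2 then
          (∑ ν : Fin N, if lev N 5 (Function.update w μ (-(w μ))) ν = 2 then
            f (Function.update (Function.update w μ (-(w μ))) ν
                (3 * (Function.update w μ (-(w μ))) ν)) else 0) else 0 := by
    rw [Azero_eq]
    apply Finset.sum_congr rfl
    intro μ _
    rw [neutral_pat w μ (Bop N p q f)]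
    split_ifs with h
    · have hm : min (-(w μ)).val (5 - (-(w μ)).val) = 2 :=
        neg_lev_two _ (by rw [← lev_eq_min]; exact h)
      have e1 := cardLev_flip w μ (-(w μ)) 2 h hm 1
      have e2 := cardLev_flip w μ (-(w μ)) 2 h hm 2
      simp only [Bop]
      rw [if_pos ⟨by omega, by omega⟩]
      exact Aplus_supp hf _ (by omega) (by omega)
    · rfl
  have hT2 : Bop N p q (Azero N 5 f) w
      = ∑ ν : Fin N, if lev N 5 w ν = 2 then
          (∑ μ : Fin N, if lev N 5 (Function.update w ν (3 * w ν)) μ = 2 then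
            f (Function.update (Function.update w ν (3 * w ν)) μ
                (-((Function.update w ν (3 * w ν)) μ))) else 0) else 0 := by
    simp only [Bop]
    rw [if_pos ⟨h1, h2⟩, Aplus_eq]
    apply Finset.sum_congr rfl
    intro ν _
    rw [split_ap, lower_pat w ν (Azero N 5 f)]
    have hz1 : (if (w ν).val = 1 then Azero N 5 f (w - eV N 5 ν) else 0) = 0 := by
      split_ifs with h
      · rw [sub_eV]
        apply Azero_vanish hf
        have hlev : lev N 5 w ν = 1 := by rw [lev_eq_min]; exact (lev_one_iff _).2 (Or.inl h)
        obtain ⟨-, hb, -⟩ := cardLev_move w ν (w ν - 1) 1 0 hlev (val_one_down _ h) (by omega)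
        intro hc; omega
      · rfl
    have hz4 : (if (w ν).val = 4 then Azero N 5 f (w + eV N 5 ν) else 0) = 0 := by
      split_ifs with h
      · rw [add_eV]
        apply Azero_vanish hf
        have hlev : lev N 5 w ν = 1 := by rw [lev_eq_min]; exact (lev_one_iff _).2 (Or.inr h)
        obtain ⟨-, hb, -⟩ := cardLev_move w ν (w ν + 1) 1 0 hlev (val_four_up _ h) (by omega)
        intro hc; omega
      · rfl
    rw [hz1, hz4, zero_add, zero_add]
    split_ifs with h
    · rw [Azero_eq]
      apply Finset.sum_congr rfl
      intro μ _
      rw [neutral_pat (Function.update w ν (3 * w ν)) μ f]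
    · rfl
  rw [hT1, hT2]
  have hpush1 : ∀ μ : Fin N, (if lev N 5 w μ = 2 then
      (∑ ν : Fin N, if lev N 5 (Function.update w μ (-(w μ))) ν = 2 then
        f (Function.update (Function.update w μ (-(w μ))) ν
            (3 * (Function.update w μ (-(w μ))) ν)) else 0) else 0)
    = ∑ ν : Fin N, (if lev N 5 w μ = 2 then
        (if lev N 5 (Function.update w μ (-(w μ))) ν = 2 then
          f (Function.update (Function.update w μ (-(w μ))) ν
              (3 * (Function.update w μ (-(w μ))) ν)) else 0) else 0) :=
    fun μ => ite_sum_push _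
  have hpush2 : ∀ ν : Fin N, (if lev N 5 w ν = 2 then
      (∑ μ : Fin N, if lev N 5 (Function.update w ν (3 * w ν)) μ = 2 then
        f (Function.update (Function.update w ν (3 * w ν)) μ
            (-((Function.update w ν (3 * w ν)) μ))) else 0) else 0)
    = ∑ μ : Fin N, (if lev N 5 w ν = 2 then
        (if lev N 5 (Function.update w ν (3 * w ν)) μ = 2 then
          f (Function.update (Function.update w ν (3 * w ν)) μ
              (-((Function.update w ν (3 * w ν)) μ))) else 0) else 0) :=
    fun ν => ite_sum_push _
  rw [Finset.sum_congr rfl (fun μ _ => hpush1 μ), Finset.sum_congr rfl (fun ν _ => hpush2 ν),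
    Finset.sum_comm, ← Finset.sum_sub_distrib]
  apply Finset.sum_congr rfl
  intro μ _
  rw [← Finset.sum_sub_distrib]
  rw [Finset.sum_eq_single_of_mem μ (Finset.mem_univ μ)]
  · -- diagonal term
    by_cases h : lev N 5 w μ = 2
    · have hu : lev N 5 (Function.update w μ (-(w μ))) μ = 2 := by
        rw [lev_update_self]
        exact neg_lev_two _ (by rw [← lev_eq_min]; exact h)
      have hd : lev N 5 (Function.update w μ (3 * w μ)) μ = 1 := by
        rw [lev_update_self]
        exact three_mul_lev _ (by rw [← lev_eq_min]; exact h)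
      rw [if_pos h, if_pos h, if_pos h, if_pos hu, if_neg (by omega), sub_zero,
        Function.update_self, Function.update_idem]
      congr 1
      rw [three_neg]
    · rw [if_neg h, if_neg h, if_neg h, sub_zero]
  · -- off-diagonal vanishing
    intro ν _ hν
    have huv : (Function.update w ν (-(w ν))) μ = w μ := Function.update_of_ne (Ne.symm hν) _ _
    have hdv : (Function.update w μ (3 * w μ)) ν = w ν := Function.update_of_ne hν _ _
    rw [lev_update_ne w (-(w ν)) (Ne.symm hν), lev_update_ne w (3 * w μ) hν, huv, hdv,
      Function.update_comm (Ne.symm hν)]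
    split_ifs <;> ring

end Aux4


section Aux5
variable {N p q : ℕ} {f : (Fin N → ZMod 5) → ℂ}

lemma two_mul_lev1 : ∀ a : ZMod 5, min a.val (5 - a.val) = 1 →
    min (2*a).val (5 - (2*a).val) = 2 := by decide

lemma two_mul_lev2 : ∀ a : ZMod 5, min a.val (5 - a.val) = 2 →
    min (2*a).val (5 - (2*a).val) = 1 := by decide

lemma two_two_mul : ∀ a : ZMod 5, 2 * (2 * a) = -a := by decide

lemma val_zero_up : ∀ a : ZMod 5, a.val = 0 →
    min (a+1).val (5 - (a+1).val) = 1 ∧ min (a-1).val (5 - (a-1).val) = 1 := by decide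

lemma vmin_neg : ∀ a : ZMod 5, min a.val (5 - a.val) = 2 →
    -(if a.val = 2 then (1 : ZMod 5) else 4) = 2 * a := by decide

lemma raise_plus : ∀ a : ZMod 5, a.val = 1 → a + 1 = 2 * a := by decide

lemma raise_minus : ∀ a : ZMod 5, a.val = 4 → a - 1 = 2 * a := by decide

open Classical in
lemma G_raise (hf : ∀ v, ¬(cardLev N 5 v 1 = p ∧ cardLev N 5 v 2 = q) → f v = 0)
    (v : Fin N → ZMod 5) (hv1 : cardLev N 5 v 1 = p) (hv2 : cardLev N 5 v 2 = q)
    (k : Fin N) (hk : lev N 5 v k = 1) :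
    Azero N 5 (Bop N p q f) (Function.update v k (2 * v k))
        - Bop N p q (Azero N 5 f) (Function.update v k (2 * v k))
      = f (Function.update v k (-(v k)))
        + ∑ μ : Fin N, (if lev N 5 v μ = 2 then
            f (Function.update (Function.update v k (2 * v k)) μ (2 * v μ)) else 0) := by
  set w := Function.update v k (2 * v k) with hw
  have hm2 : min (2 * v k).val (5 - (2 * v k).val) = 2 :=
    two_mul_lev1 _ (by rw [← lev_eq_min]; exact hk)
  obtain ⟨hc2, hc1, -⟩ := cardLev_move v k (2 * v k) 1 2 hk hm2 (by omega)
  rw [← hw] at hc1 hc2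
  rw [G_eq hf w (by omega) (by omega)]
  rw [← Finset.add_sum_erase _ _ (Finset.mem_univ k)]
  have hwk : lev N 5 w k = 2 := by rw [hw, lev_update_self]; exact hm2
  congr 1
  · rw [if_pos hwk]
    congr 1
    rw [hw, Function.update_idem, Function.update_self, two_two_mul]
  · rw [← Finset.add_sum_erase _ (fun μ => if lev N 5 v μ = 2 then
      f (Function.update w μ (2 * v μ)) else 0) (Finset.mem_univ k)]
    rw [if_neg (by omega : ¬ lev N 5 v k = 2), zero_add]
    apply Finset.sum_congr rfl
    intro μ hμ
    have hne : μ ≠ k := (Finset.mem_erase.1 hμ).1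
    have h1 : lev N 5 w μ = lev N 5 v μ := by rw [hw]; exact lev_update_ne v (2 * v k) hne
    have h2 : w μ = v μ := by rw [hw]; exact Function.update_of_ne hne _ _
    rw [h1, h2]

open Classical in
lemma Aminus_z (hf : ∀ v, ¬(cardLev N 5 v 1 = p ∧ cardLev N 5 v 2 = q) → f v = 0)
    (v : Fin N → ZMod 5) (hv1 : cardLev N 5 v 1 = p) (hv2 : cardLev N 5 v 2 = q)
    (ν : Fin N) (hν : lev N 5 v ν = 2) :
    Aminus N 5 f (Function.update v ν (2 * v ν))
      = f (Function.update v ν (-(v ν)))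
        + ∑ k : Fin N, (if lev N 5 v k = 1 then
            f (Function.update (Function.update v ν (2 * v ν)) k (2 * v k)) else 0) := by
  set z := Function.update v ν (2 * v ν) with hzdef
  have hm1 : min (2 * v ν).val (5 - (2 * v ν).val) = 1 :=
    two_mul_lev2 _ (by rw [← lev_eq_min]; exact hν)
  obtain ⟨hc1, hc2, -⟩ := cardLev_move v ν (2 * v ν) 2 1 hν hm1 (by omega)
  rw [← hzdef] at hc1 hc2
  rw [Aminus_eq]
  have perk : ∀ k : Fin N, ((if (z k).val = 0 ∨ (z k).val = 1 then f (z + eV N 5 k) else 0)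
      + (if (z k).val = 0 ∨ (z k).val = 4 then f (z - eV N 5 k) else 0))
      = (if lev N 5 z k = 1 then f (Function.update z k (2 * z k)) else 0) := by
    intro k
    rw [split_am, raise_pat z k f]
    have hz0 : (if (z k).val = 0 then f (z + eV N 5 k) + f (z - eV N 5 k) else 0) = 0 := by
      split_ifs with h
      · have hlev0 : lev N 5 z k = 0 := by rw [lev_eq_min, h]; norm_num
        obtain ⟨ha1, -, -⟩ := cardLev_move z k (z k + 1) 0 1 hlev0 ((val_zero_up _ h).1) (by omega)
        obtain ⟨hb1, -, -⟩ := cardLev_move z k (z k - 1) 0 1 hlev0 ((val_zero_up _ h).2) (by omega)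
        have e1 : f (Function.update z k (z k + 1)) = 0 := hf _ (fun hc => by omega)
        have e2 : f (Function.update z k (z k - 1)) = 0 := hf _ (fun hc => by omega)
        rw [add_eV, sub_eV, e1, e2, add_zero]
      · rfl
    rw [hz0, zero_add]
  rw [Finset.sum_congr rfl (fun k _ => perk k)]
  rw [← Finset.add_sum_erase _ _ (Finset.mem_univ ν)]
  have hzν : lev N 5 z ν = 1 := by rw [hzdef, lev_update_self]; exact hm1
  congr 1
  · rw [if_pos hzν]
    congr 1
    rw [hzdef, Function.update_idem, Function.update_self, two_two_mul]
  · rw [← Finset.add_sum_erase _ (fun k => if lev N 5 v k = 1 then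
      f (Function.update z k (2 * v k)) else 0) (Finset.mem_univ ν),
      if_neg (by omega : ¬ lev N 5 v ν = 1), zero_add]
    apply Finset.sum_congr rfl
    intro k hk
    have hne : k ≠ ν := (Finset.mem_erase.1 hk).1
    have h1 : lev N 5 z k = lev N 5 v k := by rw [hzdef]; exact lev_update_ne v (2 * v ν) hne
    have h2 : z k = v k := by rw [hzdef]; exact Function.update_of_ne hne _ _
    rw [h1, h2]

end Aux5

/-- on `C_5^N`, for `f` supported in `Σ_{p,q}` (`p ≥ 1`) and every
`v ∈ Σ_{p,q}`:
`(A₋ (A₀(B f) - B(A₀ f)))(v) = (R₁ f)(v) - (A₀ f)(v) + Σ_{ν : d_ν(v)=2} (A₋ f)((v_ν⁻)~_ν)`. -/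
theorem neutral_commutator_C5 (N p q : ℕ) (hN : 1 ≤ N) (hp : 1 ≤ p)
    (f : (Fin N → ZMod 5) → ℂ)
    (hf : ∀ v, ¬(cardLev N 5 v 1 = p ∧ cardLev N 5 v 2 = q) → f v = 0) :
    ∀ v, (cardLev N 5 v 1 = p ∧ cardLev N 5 v 2 = q) →
      Aminus N 5 (fun w => Azero N 5 (Bop N p q f) w - Bop N p q (Azero N 5 f) w) v
        = R1 N 5 f v - Azero N 5 f v
          + ∑ ν ∈ Finset.univ.filter (fun ν => lev N 5 v ν = 2),
              Aminus N 5 f (reflV N 5 ν (vmin N v ν)) := by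
  classical
  intro v hv
  obtain ⟨hv1, hv2⟩ := hv
  -- rewrite the third RHS term
  have hz : ∀ ν, lev N 5 v ν = 2 →
      reflV N 5 ν (vmin N v ν) = Function.update v ν (2 * v ν) := by
    intro ν h
    simp only [reflV, vmin, Function.update_idem, Function.update_self]
    rw [vmin_neg _ (by rw [← lev_eq_min]; exact h)]
  have hT : ∑ ν ∈ Finset.univ.filter (fun ν => lev N 5 v ν = 2),
        Aminus N 5 f (reflV N 5 ν (vmin N v ν))
      = ∑ ν ∈ Finset.univ.filter (fun ν => lev N 5 v ν = 2),
          (f (Function.update v ν (-(v ν)))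
            + ∑ k : Fin N, (if lev N 5 v k = 1 then
                f (Function.update (Function.update v ν (2 * v ν)) k (2 * v k)) else 0)) := by
    apply Finset.sum_congr rfl
    intro ν hν
    have h2 := (Finset.mem_filter.1 hν).2
    rw [hz ν h2, Aminus_z hf v hv1 hv2 ν h2]
  rw [hT, Finset.sum_add_distrib]
  have hcancel : ∑ ν ∈ Finset.univ.filter (fun ν => lev N 5 v ν = 2),
      f (Function.update v ν (-(v ν))) = Azero N 5 f v := by
    rw [Finset.sum_filter, Azero_eq]
    exact (Finset.sum_congr rfl (fun ν _ => neutral_pat v ν f)).symm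
  rw [hcancel]
  have hR1 : R1 N 5 f v
      = ∑ k : Fin N, (if lev N 5 v k = 1 then f (Function.update v k (-(v k))) else 0) := by
    simp only [R1, reflV]
    rw [Finset.sum_filter]
  rw [hR1]
  -- expand the LHS
  simp only [Aminus_eq]
  have perk : ∀ k : Fin N, ((if (v k).val = 0 ∨ (v k).val = 1 then
        Azero N 5 (Bop N p q f) (v + eV N 5 k) - Bop N p q (Azero N 5 f) (v + eV N 5 k) else 0)
      + (if (v k).val = 0 ∨ (v k).val = 4 then
        Azero N 5 (Bop N p q f) (v - eV N 5 k) - Bop N p q (Azero N 5 f) (v - eV N 5 k) else 0))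
      = (if lev N 5 v k = 1 then f (Function.update v k (-(v k))) else 0)
        + (if lev N 5 v k = 1 then (∑ μ : Fin N, if lev N 5 v μ = 2 then
            f (Function.update (Function.update v k (2 * v k)) μ (2 * v μ)) else 0) else 0) := by
    intro k
    by_cases h0 : (v k).val = 0
    · have hlev0 : lev N 5 v k = 0 := by rw [lev_eq_min, h0]; norm_num
      obtain ⟨ha1, -, -⟩ := cardLev_move v k (v k + 1) 0 1 hlev0 ((val_zero_up _ h0).1) (by omega)
      obtain ⟨hb1, -, -⟩ := cardLev_move v k (v k - 1) 0 1 hlev0 ((val_zero_up _ h0).2) (by omega)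
      have e1 : Azero N 5 (Bop N p q f) (Function.update v k (v k + 1))
          - Bop N p q (Azero N 5 f) (Function.update v k (v k + 1)) = 0 :=
        Gzero _ (fun hc => by omega)
      have e2 : Azero N 5 (Bop N p q f) (Function.update v k (v k - 1))
          - Bop N p q (Azero N 5 f) (Function.update v k (v k - 1)) = 0 :=
        Gzero _ (fun hc => by omega)
      rw [if_pos (Or.inl h0), if_pos (Or.inl h0), add_eV, sub_eV, e1, e2,
        if_neg (by omega : ¬ lev N 5 v k = 1), if_neg (by omega : ¬ lev N 5 v k = 1)]
    · by_cases h1 : (v k).val = 1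
      · have hk1 : lev N 5 v k = 1 := by
          rw [lev_eq_min]; exact (lev_one_iff _).2 (Or.inl h1)
        rw [if_pos (Or.inr h1), if_neg (by omega), add_zero, add_eV, raise_plus _ h1,
          G_raise hf v hv1 hv2 k hk1, if_pos hk1, if_pos hk1]
      · by_cases h4 : (v k).val = 4
        · have hk1 : lev N 5 v k = 1 := by
            rw [lev_eq_min]; exact (lev_one_iff _).2 (Or.inr h4)
          rw [if_neg (by omega), if_pos (Or.inr h4), zero_add, sub_eV, raise_minus _ h4,
            G_raise hf v hv1 hv2 k hk1, if_pos hk1, if_pos hk1]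
        · have hkn : ¬ lev N 5 v k = 1 := fun hc => by
            rcases (lev_one_iff (v k)).1 (by rw [← lev_eq_min]; exact hc) with h | h <;> omega
          rw [if_neg (by omega), if_neg (by omega), if_neg hkn, if_neg hkn]
  rw [Finset.sum_congr rfl (fun k (_ : k ∈ Finset.univ) => perk k), Finset.sum_add_distrib]
  -- it remains to identify the double sums
  have hfinal : (∑ k : Fin N, (if lev N 5 v k = 1 then (∑ μ : Fin N, if lev N 5 v μ = 2 then
        f (Function.update (Function.update v k (2 * v k)) μ (2 * v μ)) else 0) else 0))
      = ∑ ν ∈ Finset.univ.filter (fun ν => lev N 5 v ν = 2),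
          ∑ k : Fin N, (if lev N 5 v k = 1 then
            f (Function.update (Function.update v ν (2 * v ν)) k (2 * v k)) else 0) := by
    have swap : ∀ (k μ : Fin N), (if lev N 5 v k = 1 then (if lev N 5 v μ = 2 then
          f (Function.update (Function.update v k (2 * v k)) μ (2 * v μ)) else 0) else 0)
        = (if lev N 5 v μ = 2 then (if lev N 5 v k = 1 then
            f (Function.update (Function.update v μ (2 * v μ)) k (2 * v k)) else 0) else 0) := by
      intro k μ
      by_cases h1 : lev N 5 v k = 1
      · by_cases h2 : lev N 5 v μ = 2
        · have hne : k ≠ μ := fun e => by rw [e] at h1; omega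
          rw [if_pos h1, if_pos h2, if_pos h2, if_pos h1, Function.update_comm hne]
        · rw [if_pos h1, if_neg h2, if_neg h2]
      · by_cases h2 : lev N 5 v μ = 2
        · rw [if_neg h1, if_pos h2, if_neg h1]
        · rw [if_neg h1, if_neg h2]
    calc (∑ k : Fin N, (if lev N 5 v k = 1 then (∑ μ : Fin N, if lev N 5 v μ = 2 then
          f (Function.update (Function.update v k (2 * v k)) μ (2 * v μ)) else 0) else 0))
        = ∑ k : Fin N, ∑ μ : Fin N, (if lev N 5 v k = 1 then (if lev N 5 v μ = 2 then
            f (Function.update (Function.update v k (2 * v k)) μ (2 * v μ)) else 0) else 0) :=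
          Finset.sum_congr rfl (fun k _ => ite_sum_push _)
      _ = ∑ k : Fin N, ∑ μ : Fin N, (if lev N 5 v μ = 2 then (if lev N 5 v k = 1 then
            f (Function.update (Function.update v μ (2 * v μ)) k (2 * v k)) else 0) else 0) :=
          Finset.sum_congr rfl (fun k _ => Finset.sum_congr rfl (fun μ _ => swap k μ))
      _ = ∑ μ : Fin N, ∑ k : Fin N, (if lev N 5 v μ = 2 then (if lev N 5 v k = 1 then
            f (Function.update (Function.update v μ (2 * v μ)) k (2 * v k)) else 0) else 0) :=
          Finset.sum_comm
      _ = ∑ μ : Fin N, (if lev N 5 v μ = 2 then (∑ k : Fin N, (if lev N 5 v k = 1 then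
            f (Function.update (Function.update v μ (2 * v μ)) k (2 * v k)) else 0)) else 0) :=
          Finset.sum_congr rfl (fun μ _ => (ite_sum_push _).symm)
      _ = _ := (Finset.sum_filter _ _).symm
  rw [hfinal]
  ring
end
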